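/- Let π ∈ S_n have pinnacle set S with |S| = p, and write its pinnacles in left-to-right order as y_1, …, y_p. Assume that y_1, y_2, …, y_k are the k lowest pinnacles (in increasing order), with k ≥ 1, and that y_t with t ≠ k+1 is the next lowest pinnacle. Then there is a single balanced reversal transforming π into a permutation whose (k+1)-st pinnacle from the left is y_t, and which does not modify the pinnacles y_s for s ∈ {1, …, k, t+1, …, p}. -/

import Mathlib

/-- The block reversal: reverses the block of `π` between positions `a` and `b`. -/
def rev (π : ℕ → ℕ) (a b : ℕ) : ℕ → ℕ := fun i =>
  if a ≤ i ∧ i ≤ b then π (a + b - i) else π i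

/-- Position `i` holds a pinnacle: `π (i-1) < π i > π (i+1)`. -/
def PinAt (π : ℕ → ℕ) (i : ℕ) : Prop := π (i - 1) < π i ∧ π (i + 1) < π i

/-- Position `i` holds a dell: `π (i-1) > π i < π (i+1)`. -/
def DellAt (π : ℕ → ℕ) (i : ℕ) : Prop := π i < π (i - 1) ∧ π i < π (i + 1)

/-- Position `i` is ascending: its element belongs to an ascending set of `π`. -/
def AscAt (π : ℕ → ℕ) (i : ℕ) : Prop := π (i - 1) < π i ∧ π i < π (i + 1)

/-- Position `i` is descending: its element belongs to a descending set of `π`. -/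
def DescAt (π : ℕ → ℕ) (i : ℕ) : Prop := π i < π (i - 1) ∧ π (i + 1) < π i

/-- The pinnacle set of `π ∈ S_n`, as a finset of values. -/
def pinFinset (n : ℕ) (π : ℕ → ℕ) : Finset ℕ :=
  ((Finset.Icc 1 n).filter fun i => π (i - 1) < π i ∧ π (i + 1) < π i).image π

/-- The reversal with endpoints at positions `a ≤ b` is balanced for `π`:
it does not modify the pinnacle set. -/
def BalancedRev (n : ℕ) (π : ℕ → ℕ) (a b : ℕ) : Prop :=
  pinFinset n (rev π a b) = pinFinset n π

/-- Apply a sequence of reversals (each given by its pair of positions). -/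
def applySeq (π : ℕ → ℕ) : List (ℕ × ℕ) → ℕ → ℕ
  | [] => π
  | ab :: L => applySeq (rev π ab.1 ab.2) L

/-- Every reversal of the sequence is balanced for the permutation to which
it is applied. -/
def IsBalancedSeq (n : ℕ) (π : ℕ → ℕ) : List (ℕ × ℕ) → Prop
  | [] => True
  | ab :: L => 1 ≤ ab.1 ∧ ab.1 ≤ ab.2 ∧ ab.2 ≤ n ∧ BalancedRev n π ab.1 ab.2 ∧
      IsBalancedSeq n (rev π ab.1 ab.2) L

/-- `π` is the extension of a permutation of `{1,…,n}` by the boundary values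
`π 0 = n+1` and `π (n+1) = n+2`. -/
def IsExtPerm (n : ℕ) (π : ℕ → ℕ) : Prop :=
  Set.BijOn π (Set.Icc 1 n) (Set.Icc 1 n) ∧ π 0 = n + 1 ∧ π (n + 1) = n + 2

/-- The positions of the pinnacles of `π`, from left to right. -/
def pinPosList (n : ℕ) (π : ℕ → ℕ) : List ℕ :=
  ((Finset.Icc 1 n).filter fun i => π (i - 1) < π i ∧ π (i + 1) < π i).sort (· ≤ ·)

/-- The positions of the dells of `π`, from left to right. -/
def dellPosList (n : ℕ) (π : ℕ → ℕ) : List ℕ :=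
  ((Finset.Icc 1 n).filter fun i => π i < π (i - 1) ∧ π i < π (i + 1)).sort (· ≤ ·)

/-- The pinnacles `y_1, …, y_p` of `π`, from left to right. -/
def pinList (n : ℕ) (π : ℕ → ℕ) : List ℕ := (pinPosList n π).map π

/-- The dells `v_1, …, v_{p+1}` of `π`, from left to right. -/
def dellList (n : ℕ) (π : ℕ → ℕ) : List ℕ := (dellPosList n π).map π

/-- The position of the dell `v q` (dells are indexed from `1`). -/
def vPos (n : ℕ) (π : ℕ → ℕ) (q : ℕ) : ℕ := (dellPosList n π).getD (q - 1) 0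

/-- The dell `v q`. -/
def vVal (n : ℕ) (π : ℕ → ℕ) (q : ℕ) : ℕ := π (vPos n π q)

/-- The position of the pinnacle `y q`, where `y 0` is at position `0` and
`y (p+1)` is at position `n+1`. -/
def yPos (n : ℕ) (π : ℕ → ℕ) (q : ℕ) : ℕ :=
  if q = 0 then 0 else (pinPosList n π).getD (q - 1) (n + 1)

/-- The pinnacle `y q`, where `y 0 = π 0 = n+1` and `y (p+1) = π (n+1) = n+2`. -/
def yVal (n : ℕ) (π : ℕ → ℕ) (q : ℕ) : ℕ := π (yPos n π q)

/-- The elements of `π` at positions `1, …, n`, read from left to right. -/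
def toList (n : ℕ) (π : ℕ → ℕ) : List ℕ := (List.range n).map fun i => π (i + 1)

/-- The cutpoint `cutA_π(z, v_q, y_q)`: the largest element `e` of
`A_π(v_q, y_q) ∪ {v_q}` such that `e < z`. -/
noncomputable def cutA (n : ℕ) (π : ℕ → ℕ) (q z : ℕ) : ℕ :=
  sSup ((insert (vVal n π q) (π '' Set.Ioo (vPos n π q) (yPos n π q))) ∩ Set.Iio z)

/-- The cutpoint `cutD_π(z, y_{q-1}, v_q)`: the largest element `e` of
`D_π(y_{q-1}, v_q) ∪ {v_q}` such that `e < z`. -/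
noncomputable def cutD (n : ℕ) (π : ℕ → ℕ) (q z : ℕ) : ℕ :=
  sSup ((insert (vVal n π q) (π '' Set.Ioo (yPos n π (q - 1)) (vPos n π q))) ∩ Set.Iio z)

/-- The canonical permutation `Id_S ∈ S_n` (extended by its boundary values):
the elements of `S` in increasing order at positions `2, 4, …, 2|S|`, and the
elements of `{1,…,n} \ S` in increasing order at the remaining positions. -/
def canon (n : ℕ) (S : Finset ℕ) : ℕ → ℕ := fun i =>
  if i = 0 then n + 1
  else if i = n + 1 then n + 2
  else if i ≤ 2 * S.card ∧ i % 2 = 0 then (S.sort (· ≤ ·)).getD (i / 2 - 1) 0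
  else if i ≤ 2 * S.card then (((Finset.Icc 1 n) \ S).sort (· ≤ ·)).getD ((i - 1) / 2) 0
  else (((Finset.Icc 1 n) \ S).sort (· ≤ ·)).getD (i - S.card - 1) 0

private lemma rev_of_mem (π : ℕ → ℕ) {a b i : ℕ} (h1 : a ≤ i) (h2 : i ≤ b) :
    rev π a b i = π (a + b - i) := by
  simp only [rev]; rw [if_pos ⟨h1, h2⟩]

private lemma rev_of_not (π : ℕ → ℕ) {a b i : ℕ} (h : ¬(a ≤ i ∧ i ≤ b)) :
    rev π a b i = π i := by
  simp only [rev]; rw [if_neg h]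

private lemma revPinChar (π : ℕ → ℕ) {a b : ℕ} (ha : 1 ≤ a) (hab : a < b)
    (j1a : π (a - 1) < π a) (j1b : π (a - 1) < π b)
    (j2a : π (b + 1) < π b) (j2b : π (b + 1) < π a) {i : ℕ} (hi : 1 ≤ i) :
    (rev π a b (i - 1) < rev π a b i ∧ rev π a b (i + 1) < rev π a b i) ↔
      (if a ≤ i ∧ i ≤ b
        then π (a + b - i - 1) < π (a + b - i) ∧ π (a + b - i + 1) < π (a + b - i)
        else π (i - 1) < π i ∧ π (i + 1) < π i) := by
  have hcases : i + 1 < a ∨ i + 1 = a ∨ i = a ∨ (a < i ∧ i < b) ∨ i = b ∨ i = b + 1 ∨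
      b + 1 < i := by omega
  rcases hcases with h | h | h | ⟨h1, h2⟩ | h | h | h
  · rw [rev_of_not π (by omega), rev_of_not π (by omega), rev_of_not π (by omega),
      if_neg (by omega)]
  · have hie : i = a - 1 := by omega
    subst hie
    rw [(show a - 1 + 1 = a by omega)]
    rw [rev_of_not π (by omega), rev_of_not π (by omega),
      rev_of_mem π le_rfl hab.le, (show a + b - a = b by omega), if_neg (by omega)]
    exact iff_of_false (fun hh => absurd hh.2 (not_lt.2 j1b.le))
      (fun hh => absurd hh.2 (not_lt.2 j1a.le))
  · subst h
    rw [rev_of_not π (by omega), rev_of_mem π le_rfl hab.le,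
      rev_of_mem π (by omega) (by omega), (show i + b - (i + 1) = b - 1 by omega),
      if_pos ⟨le_rfl, hab.le⟩, (show i + b - i = b by omega)]
    exact ⟨fun hh => ⟨hh.2, j2a⟩, fun hh => ⟨j1b, hh.1⟩⟩
  · rw [rev_of_mem π (by omega) (by omega), rev_of_mem π (by omega) (by omega),
      rev_of_mem π (by omega) (by omega), (show a + b - (i - 1) = a + b - i + 1 by omega),
      (show a + b - (i + 1) = a + b - i - 1 by omega), if_pos ⟨by omega, by omega⟩]
    exact and_comm
  · subst h
    rw [rev_of_mem π (by omega) (by omega), rev_of_mem π hab.le le_rfl,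
      rev_of_not π (by omega), (show a + i - (i - 1) = a + 1 by omega),
      (show a + i - i = a by omega), if_pos ⟨hab.le, le_rfl⟩]
    exact ⟨fun hh => ⟨j1a, hh.1⟩, fun hh => ⟨hh.2, j2b⟩⟩
  · subst h
    rw [(show b + 1 - 1 = b by omega)]
    rw [rev_of_mem π hab.le le_rfl, rev_of_not π (by omega), rev_of_not π (by omega),
      (show a + b - b = a by omega), if_neg (by omega)]
    exact iff_of_false (fun hh => absurd hh.1 (not_lt.2 j2b.le))
      (fun hh => absurd hh.1 (not_lt.2 j2a.le))
  · rw [rev_of_not π (by omega), rev_of_not π (by omega), rev_of_not π (by omega),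
      if_neg (by omega)]

/-- Lemma 4.2. Write the pinnacles of `π` from left to right as
`Y = [y_1, …, y_p]`. Assume `y_1, …, y_k` (`k ≥ 1`) are the `k` lowest pinnacles in
increasing order, and `y_t`, with `k < t ≤ p` and `t ≠ k + 1`, is the next lowest
pinnacle. Then a single balanced reversal transforms `π` into a permutation whose
`(k+1)`-st pinnacle from the left is `y_t`, and which has the same pinnacles `y_s`
for `s ∈ {1, …, k} ∪ {t+1, …, p}`. -/
theorem statement13 (n : ℕ) (π : ℕ → ℕ) (hπ : IsExtPerm n π)
    (Y : List ℕ) (hY : Y = pinList n π) (p : ℕ) (hp : p = Y.length)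
    (k t : ℕ) (hk : 1 ≤ k) (hkt : k < t) (htp : t ≤ p) (htk : t ≠ k + 1)
    (hlow : ∀ s s', 1 ≤ s → s ≤ k → s < s' → s' ≤ p →
      Y.getD (s - 1) 0 < Y.getD (s' - 1) 0)
    (hnext : ∀ s, k < s → s ≤ p → s ≠ t →
      Y.getD (t - 1) 0 < Y.getD (s - 1) 0) :
    ∃ a b, 1 ≤ a ∧ a ≤ b ∧ b ≤ n ∧ BalancedRev n π a b ∧
      (pinList n (rev π a b)).getD k 0 = Y.getD (t - 1) 0 ∧
      ∀ s, (1 ≤ s ∧ s ≤ k) ∨ (t + 1 ≤ s ∧ s ≤ p) →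
        (pinList n (rev π a b)).getD (s - 1) 0 = Y.getD (s - 1) 0 := by
  classical
  obtain ⟨hbij, h0, hn1⟩ := hπ
  have hinj := hbij.injOn
  obtain ⟨F, hF⟩ : ∃ F : Finset ℕ,
      F = (Finset.Icc 1 n).filter (fun i => π (i - 1) < π i ∧ π (i + 1) < π i) := ⟨_, rfl⟩
  obtain ⟨P, hP⟩ : ∃ P : List ℕ, P = F.sort (· ≤ ·) := ⟨_, rfl⟩
  have hPpin : pinPosList n π = P := by rw [hP, hF]; rfl
  have hYP : Y = P.map π := by rw [hY, pinList, hPpin]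
  have hplen : P.length = p := by rw [hp, hYP, List.length_map]
  have hmemP : ∀ {x : ℕ}, x ∈ P ↔ x ∈ F := by intro x; rw [hP]; exact Finset.mem_sort _
  have hPel : ∀ {x : ℕ}, x ∈ P → (1 ≤ x ∧ x ≤ n) ∧ π (x - 1) < π x ∧ π (x + 1) < π x := by
    intro x hx
    have hx2 := hmemP.1 hx
    rw [hF, Finset.mem_filter, Finset.mem_Icc] at hx2
    exact hx2
  have hsort : P.Pairwise (· < ·) := by rw [hP]; exact List.sortedLT_iff_pairwise.1 (Finset.sortedLT_sort F)
  have hmono : ∀ (i j : ℕ) (hij : i < j) (hj : j < P.length),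
      P[i]'(Nat.lt_trans hij hj) < P[j]'hj :=
    fun i j hij hj => List.pairwise_iff_getElem.1 hsort i j (Nat.lt_trans hij hj) hj hij
  have hmono_le : ∀ (i j : ℕ) (hij : i ≤ j) (hj : j < P.length),
      P[i]'(Nat.lt_of_le_of_lt hij hj) ≤ P[j]'hj := by
    intro i j hij hj
    rcases Nat.eq_or_lt_of_le hij with h | h
    · subst h; exact le_rfl
    · exact (hmono i j h hj).le
  have hPidx : ∀ (i j : ℕ) (h : i = j) (hj : j < P.length), P[i]'(h ▸ hj) = P[j]'hj := by
    intro i j h hj; cases h; rfl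
  have htlen : t - 1 < P.length := by omega
  have hklen : k < P.length := by omega
  have hk1len : k - 1 < P.length := by omega
  have hPics : ∀ (j : ℕ) (hj : j < P.length),
      1 ≤ P[j]'hj ∧ P[j]'hj ≤ n ∧ π (P[j]'hj - 1) < π (P[j]'hj) ∧
        π (P[j]'hj + 1) < π (P[j]'hj) := by
    intro j hj
    obtain ⟨⟨a1, a2⟩, a3, a4⟩ := hPel (List.getElem_mem hj)
    exact ⟨a1, a2, a3, a4⟩
  have hYget : ∀ (j : ℕ) (hj : j < P.length), Y.getD j 0 = π (P[j]'hj) := by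
    intro j hj
    rw [hYP, List.getD_eq_getElem _ _ (by rw [List.length_map]; exact hj), List.getElem_map]
  obtain ⟨z, hz⟩ : ∃ z : ℕ, z = π (P[t - 1]'htlen) := ⟨_, rfl⟩
  -- basic position facts
  have hqk_lt : P[k - 1]'hk1len < P[k]'hklen := hmono (k - 1) k (by omega) hklen
  have hPkPt : P[k]'hklen < P[t - 1]'htlen := hmono k (t - 1) (by omega) htlen
  obtain ⟨hqk1, hqkn, -, -⟩ := hPics (k - 1) hk1len
  obtain ⟨hqk11, hqk1n, hqk1pin1, hqk1pin2⟩ := hPics k hklen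
  obtain ⟨hqt1, hqtn, hqtpin1, hqtpin2⟩ := hPics (t - 1) htlen
  have hyk_lt_z : π (P[k - 1]'hk1len) < z := by
    have hh := hlow k t hk le_rfl hkt htp
    rwa [hYget (k - 1) hk1len, hYget (t - 1) htlen, ← hz] at hh
  -- the left endpoint
  obtain ⟨C1, hC1⟩ : ∃ C : ℕ → Prop, C = fun i => P[k - 1]'hk1len ≤ i ∧ π i < z := ⟨_, rfl⟩
  haveI : DecidablePred C1 := Classical.decPred _
  obtain ⟨m, hmdef⟩ : ∃ m : ℕ, m = Nat.findGreatest C1 (P[k]'hklen - 1) := ⟨_, rfl⟩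
  have hwit1 : C1 (P[k - 1]'hk1len) := by rw [hC1]; exact ⟨le_rfl, hyk_lt_z⟩
  have hm_spec : C1 m := by rw [hmdef]; exact Nat.findGreatest_spec (by omega) hwit1
  have hm_le : m ≤ P[k]'hklen - 1 := by rw [hmdef]; exact Nat.findGreatest_le _
  rw [hC1] at hm_spec
  have hm1z : z < π (m + 1) := by
    by_cases hcase : m + 1 = P[k]'hklen
    · rw [hcase]
      have hh := hnext (k + 1) (by omega) (by omega) (by omega)
      rwa [hYget (t - 1) htlen, ← hz, (show k + 1 - 1 = k by omega), hYget k hklen] at hh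
    · have hng : ¬ C1 (m + 1) := by
        apply Nat.findGreatest_is_greatest (n := P[k]'hklen - 1) <;> omega
      rw [hC1] at hng
      have hge : z ≤ π (m + 1) := by
        by_contra hlt
        exact hng ⟨by omega, by omega⟩
      have hne : π (m + 1) ≠ z := by
        intro heq
        rw [hz] at heq
        have h1n : (m + 1 : ℕ) ∈ Set.Icc 1 n := ⟨by omega, by omega⟩
        have h2n : (P[t - 1]'htlen) ∈ Set.Icc 1 n := ⟨hqt1, hqtn⟩
        have := hinj h1n h2n heq
        omega
      omega
  -- the right endpoint
  obtain ⟨C2, hC2⟩ : ∃ C : ℕ → Prop, C = fun i => P[t - 1]'htlen ≤ i ∧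
      (∀ j, P[t - 1]'htlen ≤ j → j ≤ i → π (j + 1) < π j) ∧ π m < π i := ⟨_, rfl⟩
  haveI : DecidablePred C2 := Classical.decPred _
  obtain ⟨b, hbdef⟩ : ∃ b : ℕ, b = Nat.findGreatest C2 n := ⟨_, rfl⟩
  have hwit2 : C2 (P[t - 1]'htlen) := by
    rw [hC2]
    refine ⟨le_rfl, ?_, by rw [← hz]; exact hm_spec.2⟩
    intro j hj1 hj2
    have hje : j = P[t - 1]'htlen := le_antisymm hj2 hj1
    rw [hje]; exact hqtpin2
  have hb_spec : C2 b := by rw [hbdef]; exact Nat.findGreatest_spec hqtn hwit2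
  have hb_le : b ≤ n := by rw [hbdef]; exact Nat.findGreatest_le _
  rw [hC2] at hb_spec
  obtain ⟨hqtb, hbdec, hmb⟩ := hb_spec
  have hchain : ∀ d : ℕ, P[t - 1]'htlen + d ≤ b + 1 → π (P[t - 1]'htlen + d) ≤ z := by
    intro d
    induction d with
    | zero => intro _; rw [hz]; exact le_rfl
    | succ d ih =>
      intro hle
      have hd1 := hbdec (P[t - 1]'htlen + d) (by omega) (by omega)
      have hd2 := ih (by omega)
      exact le_of_lt (lt_of_lt_of_le hd1 hd2)
  have hbz : π b ≤ z := by
    have hh := hchain (b - P[t - 1]'htlen) (by omega)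
    rwa [(show P[t - 1]'htlen + (b - P[t - 1]'htlen) = b by omega)] at hh
  have hb1b : π (b + 1) < π b := hbdec b hqtb le_rfl
  have hb1z : π (b + 1) < z := lt_of_lt_of_le hb1b hbz
  have hbPt : ∀ (h : t < P.length), b < P[t]'h := by
    intro h
    by_contra hge
    push_neg at hge
    have hlt : P[t - 1]'htlen < P[t]'h := hmono (t - 1) t (by omega) h
    have h2 := hbdec (P[t]'h - 1) (by omega) (by omega)
    rw [(show P[t]'h - 1 + 1 = P[t]'h by omega)] at h2
    have h3 := (hPics t h).2.2.1
    omega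
  have hab : m + 1 < b := by omega
  -- junction inequalities
  have j1a : π (m + 1 - 1) < π (m + 1) := by
    rw [(show m + 1 - 1 = m by omega)]; omega
  have j1b : π (m + 1 - 1) < π b := by rw [(show m + 1 - 1 = m by omega)]; exact hmb
  have j2b : π (b + 1) < π (m + 1) := by omega
  have hchar := fun (x : ℕ) (hx : 1 ≤ x) =>
    revPinChar π (by omega : 1 ≤ m + 1) hab j1a j1b hb1b j2b (i := x) hx
  -- the reflection map
  obtain ⟨g, hgdef⟩ : ∃ g : ℕ → ℕ,
      g = fun i => if m + 1 ≤ i ∧ i ≤ b then m + 1 + b - i else i := ⟨_, rfl⟩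
  have hgin : ∀ x : ℕ, m + 1 ≤ x ∧ x ≤ b → g x = m + 1 + b - x := by
    intro x hx; rw [hgdef]; exact if_pos hx
  have hgout : ∀ x : ℕ, ¬(m + 1 ≤ x ∧ x ≤ b) → g x = x := by
    intro x hx; rw [hgdef]; exact if_neg hx
  have hgg : ∀ x, g (g x) = x := by
    intro x
    by_cases hx : m + 1 ≤ x ∧ x ≤ b
    · rw [hgin x hx, hgin _ (by omega)]; omega
    · rw [hgout x hx, hgout x hx]
  have hrevg : ∀ x, rev π (m + 1) b (g x) = π x := by
    intro x
    by_cases hx : m + 1 ≤ x ∧ x ≤ b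
    · rw [hgin x hx, rev_of_mem π (by omega) (by omega),
        (show m + 1 + b - (m + 1 + b - x) = x by omega)]
    · rw [hgout x hx, rev_of_not π hx]
  have hgIcc : ∀ x : ℕ, 1 ≤ x ∧ x ≤ n → 1 ≤ g x ∧ g x ≤ n := by
    intro x hx
    by_cases h : m + 1 ≤ x ∧ x ≤ b
    · rw [hgin x h]; omega
    · rw [hgout x h]; exact hx
  have hcharg : ∀ x : ℕ, 1 ≤ x →
      ((rev π (m + 1) b (x - 1) < rev π (m + 1) b x ∧
        rev π (m + 1) b (x + 1) < rev π (m + 1) b x) ↔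
        (π (g x - 1) < π (g x) ∧ π (g x + 1) < π (g x))) := by
    intro x hx
    rw [hchar x hx]
    by_cases h : m + 1 ≤ x ∧ x ≤ b
    · rw [if_pos h, hgin x h]
    · rw [if_neg h, hgout x h]
  have hFeq : (Finset.Icc 1 n).filter
      (fun i => rev π (m + 1) b (i - 1) < rev π (m + 1) b i ∧
        rev π (m + 1) b (i + 1) < rev π (m + 1) b i) = F.image g := by
    ext x
    rw [Finset.mem_filter, Finset.mem_image, Finset.mem_Icc]
    constructor
    · rintro ⟨hx, hpx⟩
      refine ⟨g x, ?_, hgg x⟩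
      rw [hF, Finset.mem_filter, Finset.mem_Icc]
      exact ⟨hgIcc x hx, (hcharg x hx.1).1 hpx⟩
    · rintro ⟨y, hy, rfl⟩
      rw [hF, Finset.mem_filter, Finset.mem_Icc] at hy
      refine ⟨hgIcc y hy.1, ?_⟩
      apply (hcharg (g y) (hgIcc y hy.1).1).2
      rw [hgg y]
      exact hy.2
  have hbal : BalancedRev n π (m + 1) b := by
    show pinFinset n (rev π (m + 1) b) = pinFinset n π
    have h1 : pinFinset n (rev π (m + 1) b) = ((Finset.Icc 1 n).filter
        (fun i => rev π (m + 1) b (i - 1) < rev π (m + 1) b i ∧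
          rev π (m + 1) b (i + 1) < rev π (m + 1) b i)).image (rev π (m + 1) b) := rfl
    have h2 : pinFinset n π = F.image π := by rw [hF]; rfl
    rw [h1, hFeq, Finset.image_image, h2]
    exact Finset.image_congr (fun x _ => hrevg x)
  -- ranges of the three blocks
  have hmemA : ∀ x ∈ P.take k, x < m + 1 := by
    intro x hx
    obtain ⟨i, hi, rfl⟩ := List.mem_iff_getElem.1 hx
    have hi' : i < k := by rw [List.length_take] at hi; omega
    rw [List.getElem_take]
    have h2 := hmono_le i (k - 1) (by omega) hk1len
    omega
  have hmemM : ∀ x ∈ (P.drop k).take (t - k), m + 1 ≤ x ∧ x ≤ b := by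
    intro x hx
    obtain ⟨i, hi, rfl⟩ := List.mem_iff_getElem.1 hx
    have hi' : i < t - k := by
      rw [List.length_take, List.length_drop] at hi; omega
    rw [List.getElem_take, List.getElem_drop]
    have h1 := hmono_le k (k + i) (by omega) (by omega)
    have h2 := hmono_le (k + i) (t - 1) (by omega) htlen
    omega
  have hmemB : ∀ x ∈ (((P.drop k).take (t - k)).map g).reverse, m + 1 ≤ x ∧ x ≤ b := by
    intro x hx
    rw [List.mem_reverse, List.mem_map] at hx
    obtain ⟨y, hy, rfl⟩ := hx
    have h1 := hmemM y hy
    rw [hgin y h1]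
    omega
  have hmemC : ∀ x ∈ P.drop t, b < x := by
    intro x hx
    obtain ⟨i, hi, rfl⟩ := List.mem_iff_getElem.1 hx
    have hi' : i < P.length - t := by rwa [List.length_drop] at hi
    rw [List.getElem_drop]
    have ht' : t < P.length := by omega
    have h1 := hmono_le t (t + i) (by omega) (by omega)
    have h2 := hbPt ht'
    omega
  -- the candidate list is sorted
  have hsortL : (P.take k ++ (((P.drop k).take (t - k)).map g).reverse ++
      P.drop t).Pairwise (· < ·) := by
    rw [List.append_assoc, List.pairwise_append]
    refine ⟨List.Pairwise.sublist (List.take_sublist k P) hsort, ?_, ?_⟩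
    · rw [List.pairwise_append]
      refine ⟨?_, List.Pairwise.sublist (List.drop_sublist t P) hsort, ?_⟩
      · rw [List.pairwise_reverse, List.pairwise_map]
        have hMsort : ((P.drop k).take (t - k)).Pairwise (· < ·) :=
          List.Pairwise.sublist ((List.take_sublist _ _).trans (List.drop_sublist _ _)) hsort
        refine List.Pairwise.imp_of_mem ?_ hMsort
        intro x y hx hy hxy
        have h1 := hmemM x hx
        have h2 := hmemM y hy
        rw [hgin x h1, hgin y h2]
        omega
      · intro x hx y hy
        have h1 := hmemB x hx
        have h2 := hmemC y hy
        omega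
    · intro x hx y hy
      have h1 := hmemA x hx
      rw [List.mem_append] at hy
      rcases hy with hy | hy
      · have h2 := hmemB y hy; omega
      · have h2 := hmemC y hy; omega
  have hnodupL : (P.take k ++ (((P.drop k).take (t - k)).map g).reverse ++
      P.drop t).Nodup := List.Pairwise.imp (fun h => ne_of_lt h) hsortL
  have hsortLe : (P.take k ++ (((P.drop k).take (t - k)).map g).reverse ++
      P.drop t).Pairwise (· ≤ ·) := List.Pairwise.imp (fun h => le_of_lt h) hsortL
  -- membership in the candidate list
  have hmemL : ∀ x : ℕ, x ∈ (P.take k ++ (((P.drop k).take (t - k)).map g).reverse ++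
      P.drop t) ↔ x ∈ F.image g := by
    intro x
    rw [Finset.mem_image]
    constructor
    · intro hx
      rw [List.mem_append, List.mem_append] at hx
      rcases hx with (hx | hx) | hx
      · have hxP : x ∈ P := List.Sublist.mem hx (List.take_sublist k P)
        refine ⟨x, hmemP.1 hxP, ?_⟩
        have := hmemA x hx
        rw [hgout _ (by omega)]
      · rw [List.mem_reverse, List.mem_map] at hx
        obtain ⟨y, hy, rfl⟩ := hx
        have hyP : y ∈ P := List.Sublist.mem hy
          ((List.take_sublist _ _).trans (List.drop_sublist _ _))
        exact ⟨y, hmemP.1 hyP, rfl⟩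
      · have hxP : x ∈ P := List.Sublist.mem hx (List.drop_sublist t P)
        refine ⟨x, hmemP.1 hxP, ?_⟩
        have := hmemC x hx
        rw [hgout _ (by omega)]
    · rintro ⟨y, hyF, rfl⟩
      have hyP : y ∈ P := hmemP.2 hyF
      obtain ⟨l, hl, rfl⟩ := List.mem_iff_getElem.1 hyP
      rw [List.mem_append, List.mem_append]
      by_cases h1 : l < k
      · left; left
        have hx : P[l]'hl ∈ P.take k := by
          rw [List.mem_iff_getElem]
          exact ⟨l, by rw [List.length_take]; omega, by rw [List.getElem_take]⟩
        have := hmemA _ hx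
        rw [hgout _ (by omega)]
        exact hx
      · by_cases h2 : l < t
        · left; right
          obtain ⟨d, rfl⟩ : ∃ d, l = k + d := ⟨l - k, by omega⟩
          rw [List.mem_reverse, List.mem_map]
          refine ⟨((P.drop k).take (t - k))[d]'(by
            rw [List.length_take, List.length_drop]; omega), List.getElem_mem _, ?_⟩
          rw [List.getElem_take, List.getElem_drop]
        · right
          obtain ⟨d, rfl⟩ : ∃ d, l = t + d := ⟨l - t, by omega⟩
          have hx : P[t + d]'hl ∈ P.drop t := by
            rw [List.mem_iff_getElem]
            exact ⟨d, by rw [List.length_drop]; omega, by rw [List.getElem_drop]⟩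
          have := hmemC _ hx
          rw [hgout _ (by omega)]
          exact hx
  -- identification of the new pinnacle position list
  have hLeq : pinPosList n (rev π (m + 1) b) = P.take k ++
      (((P.drop k).take (t - k)).map g).reverse ++ P.drop t := by
    have h1 : pinPosList n (rev π (m + 1) b) = ((Finset.Icc 1 n).filter
        (fun i => rev π (m + 1) b (i - 1) < rev π (m + 1) b i ∧
          rev π (m + 1) b (i + 1) < rev π (m + 1) b i)).sort (· ≤ ·) := rfl
    have h2 : F.image g = (P.take k ++ (((P.drop k).take (t - k)).map g).reverse ++
        P.drop t).toFinset := by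
      ext x
      rw [List.mem_toFinset]
      exact (hmemL x).symm
    rw [h1, hFeq, h2]
    exact (List.toFinset_sort (r := (· ≤ ·)) hnodupL).2 hsortLe
  have hmapL : pinList n (rev π (m + 1) b) = (P.take k ++
      (((P.drop k).take (t - k)).map g).reverse ++ P.drop t).map (rev π (m + 1) b) := by
    unfold pinList
    rw [hLeq]
  have hlenL : (P.take k ++ (((P.drop k).take (t - k)).map g).reverse ++
      P.drop t).length = p := by
    simp only [List.length_append, List.length_take, List.length_reverse,
      List.length_map, List.length_drop]
    omega
  have hlenAB : (P.take k ++ (((P.drop k).take (t - k)).map g).reverse).length = t := by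
    simp only [List.length_append, List.length_take, List.length_reverse,
      List.length_map, List.length_drop]
    omega
  have hBget : ∀ (i : ℕ) (hi : i < t - k),
      ((((P.drop k).take (t - k)).map g).reverse)[i]'(by
        simp only [List.length_reverse, List.length_map, List.length_take,
          List.length_drop]; omega) = g (P[k + (t - k - 1 - i)]'(by omega)) := by
    intro i hi
    rw [List.getElem_reverse, List.getElem_map, List.getElem_take, List.getElem_drop]
    exact congrArg g (hPidx _ _ (by
      simp only [List.length_map, List.length_take, List.length_drop]; omega) (by omega))
  refine ⟨m + 1, b, by omega, by omega, hb_le, hbal, ?_, ?_⟩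
  · -- the (k+1)-st pinnacle is y_t
    rw [hmapL, List.getD_eq_getElem _ _ (by rw [List.length_map, hlenL]; omega),
      List.getElem_map]
    rw [List.getElem_append_left (by rw [hlenAB]; omega)]
    rw [List.getElem_append_right (by rw [List.length_take]; omega)]
    simp only [show (P.take k).length = k from by rw [List.length_take]; omega, Nat.sub_self]
    rw [hBget 0 (by omega), hrevg, hYget (t - 1) htlen]
    exact congrArg π (hPidx _ _ (by omega) htlen)
  · -- the low and high pinnacles are unchanged
    intro s hs
    rw [hmapL, List.getD_eq_getElem _ _ (by rw [List.length_map, hlenL]; omega),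
      List.getElem_map]
    rcases hs with ⟨hs1, hs2⟩ | ⟨hs1, hs2⟩
    · rw [List.getElem_append_left (by rw [hlenAB]; omega)]
      rw [List.getElem_append_left (by rw [List.length_take]; omega)]
      rw [List.getElem_take]
      have hsk : P[s - 1]'(by omega) ≤ P[k - 1]'hk1len := hmono_le (s - 1) (k - 1) (by omega) hk1len
      rw [rev_of_not π (by omega)]
      rw [hYget (s - 1) (by omega)]
    · rw [List.getElem_append_right (by rw [hlenAB]; omega)]
      simp only [hlenAB]
      rw [List.getElem_drop]
      have ht' : t < P.length := by omega
      have hsk : P[t]'ht' ≤ P[t + (s - 1 - t)]'(by omega) := hmono_le t (t + (s - 1 - t)) (by omega) (by omega)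
      have hbt := hbPt ht'
      rw [rev_of_not π (by omega)]
      rw [hYget (s - 1) (by omega)]
      exact congrArg π (hPidx _ _ (by omega) (by omega))
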